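/- Mixture martingale for the method of mixtures: In the bandit model with K arms, set S_{t,a} = Σ_{1≤s≤t : A_s=a} η_s and N_a(t) = #{1 ≤ s ≤ t : A_s = a}. For any probability measure ρ on ℝ^K, define M_t = ∫_{ℝ^K} exp( Σ_{a=1}^K λ_a·S_{t,a} − Σ_{a=1}^K N_a(t)·λ_a²/2 ) dρ(λ) for t ≥ 0 (so M_0 = 1). Then (M_t)_{t≥0} is a martingale with respect to the filtration (ℱ_t), and E[M_t] = 1 for every t ≥ 0. -/

import Mathlib

open MeasureTheory ProbabilityTheory

section Stmt12Aux

/-- The exponential kernel appearing in the mixture martingale. -/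
noncomputable def fker {K : ℕ} {Ω : Type} (A : ℕ → Ω → Fin K) (η : ℕ → Ω → ℝ)
    (t : ℕ) (lam : Fin K → ℝ) (ω : Ω) : ℝ :=
  Real.exp ((∑ a, lam a * ∑ s ∈ (Finset.Icc 1 t).filter (fun s => A s ω = a), η s ω)
    - ∑ a, (((Finset.Icc 1 t).filter fun s => A s ω = a).card : ℝ) * lam a ^ 2 / 2)

lemma fker_nonneg {K : ℕ} {Ω : Type} (A : ℕ → Ω → Fin K) (η : ℕ → Ω → ℝ)
    (t : ℕ) (lam : Fin K → ℝ) (ω : Ω) : 0 ≤ fker A η t lam ω :=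
  Real.exp_nonneg _

lemma fker_succ {K : ℕ} {Ω : Type} (A : ℕ → Ω → Fin K) (η : ℕ → Ω → ℝ)
    (t : ℕ) (lam : Fin K → ℝ) (ω : Ω) :
    fker A η (t+1) lam ω = fker A η t lam ω *
      Real.exp (lam (A (t+1) ω) * η (t+1) ω - lam (A (t+1) ω) ^ 2 / 2) := by
  classical
  unfold fker
  rw [← Real.exp_add]
  congr 1
  simp only [Finset.sum_filter, Finset.card_filter,
    Finset.sum_Icc_succ_top (Nat.le_add_left 1 t)]
  push_cast
  have hsum : ∀ (g : Fin K → ℝ),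
      (∑ a : Fin K, if A (t+1) ω = a then g a else 0) = g (A (t+1) ω) := by
    intro g; rw [Finset.sum_ite_eq]; simp
  have E1 : (∑ a : Fin K, lam a * ((∑ s ∈ Finset.Icc 1 t, if A s ω = a then η s ω else 0)
        + (if A (t+1) ω = a then η (t+1) ω else 0)))
      = (∑ a : Fin K, lam a * (∑ s ∈ Finset.Icc 1 t, if A s ω = a then η s ω else 0))
        + lam (A (t+1) ω) * η (t+1) ω := by
    rw [← hsum (fun a => lam a * η (t+1) ω), ← Finset.sum_add_distrib]
    refine Finset.sum_congr rfl fun a _ => ?_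
    split_ifs <;> ring
  have E2 : (∑ a : Fin K, ((∑ s ∈ Finset.Icc 1 t, if A s ω = a then (1:ℝ) else 0)
        + (if A (t+1) ω = a then (1:ℝ) else 0)) * lam a ^ 2 / 2)
      = (∑ a : Fin K, (∑ s ∈ Finset.Icc 1 t, if A s ω = a then (1:ℝ) else 0) * lam a ^ 2 / 2)
        + lam (A (t+1) ω) ^ 2 / 2 := by
    rw [← hsum (fun a => lam a ^ 2 / 2), ← Finset.sum_add_distrib]
    refine Finset.sum_congr rfl fun a _ => ?_
    split_ifs <;> ring
  rw [E1, E2]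
  ring

lemma fker_measurable {K : ℕ} {Ω : Type} [m : MeasurableSpace Ω]
    (A : ℕ → Ω → Fin K) (η : ℕ → Ω → ℝ) (t : ℕ)
    (hA : ∀ s, 1 ≤ s → s ≤ t → Measurable (A s))
    (hη : ∀ s, 1 ≤ s → s ≤ t → Measurable (η s)) :
    Measurable (fun p : Ω × (Fin K → ℝ) => fker A η t p.2 p.1) := by
  classical
  unfold fker
  apply Measurable.exp
  apply Measurable.sub
  · apply Finset.measurable_sum
    intro a _
    refine Measurable.mul ((measurable_pi_apply a).comp measurable_snd) ?_
    simp only [Finset.sum_filter]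
    apply Finset.measurable_sum
    intro s hs
    simp only [Finset.mem_Icc] at hs
    have hAs : Measurable fun p : Ω × (Fin K → ℝ) => A s p.1 :=
      (hA s hs.1 hs.2).comp measurable_fst
    have hηs : Measurable fun p : Ω × (Fin K → ℝ) => η s p.1 :=
      (hη s hs.1 hs.2).comp measurable_fst
    exact Measurable.ite (hAs (measurableSet_singleton a)) hηs measurable_const
  · simp only [Finset.card_filter, Nat.cast_sum, Nat.cast_ite, Nat.cast_one, Nat.cast_zero]
    apply Finset.measurable_sum
    intro a _
    apply Measurable.div_const
    refine Measurable.mul ?_ (((measurable_pi_apply a).comp measurable_snd).pow_const 2)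
    apply Finset.measurable_sum
    intro s hs
    simp only [Finset.mem_Icc] at hs
    have hAs : Measurable fun p : Ω × (Fin K → ℝ) => A s p.1 :=
      (hA s hs.1 hs.2).comp measurable_fst
    exact Measurable.ite (hAs (measurableSet_singleton a)) measurable_const measurable_const

lemma arith_aux (l S : ℝ) (n : ℕ) (h : n = 0 → S = 0) :
    l * S - (n : ℝ) * l ^ 2 / 2 ≤ S ^ 2 / 2 := by
  rcases Nat.eq_zero_or_pos n with h0 | h0
  · simp [h0, h h0]
  · have hn : (1:ℝ) ≤ (n:ℝ) := by exact_mod_cast h0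
    nlinarith [sq_nonneg (l - S), sq_nonneg l, mul_le_mul_of_nonneg_right hn (sq_nonneg l)]

lemma fker_le {K : ℕ} {Ω : Type} (A : ℕ → Ω → Fin K) (η : ℕ → Ω → ℝ)
    (t : ℕ) (lam : Fin K → ℝ) (ω : Ω) :
    fker A η t lam ω ≤
      Real.exp (∑ a, (∑ s ∈ (Finset.Icc 1 t).filter (fun s => A s ω = a), η s ω) ^ 2 / 2) := by
  classical
  unfold fker
  rw [Real.exp_le_exp, ← Finset.sum_sub_distrib]
  apply Finset.sum_le_sum
  intro a _
  refine arith_aux _ _ _ ?_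
  intro h0
  rw [Finset.card_eq_zero] at h0
  rw [h0, Finset.sum_empty]

lemma gauss_lint (c : ℝ) :
    ∫⁻ x, ENNReal.ofReal (Real.exp (c * x - c ^ 2 / 2)) ∂(gaussianReal 0 1) = 1 := by
  have hφ : Measurable (fun x : ℝ => ENNReal.ofReal (Real.exp (c * x - c ^ 2 / 2))) :=
    (Real.measurable_exp.comp ((measurable_id.const_mul c).sub_const _)).ennreal_ofReal
  rw [gaussianReal_of_var_ne_zero 0 one_ne_zero,
    lintegral_withDensity_eq_lintegral_mul _ (measurable_gaussianPDF 0 1) hφ]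
  have hpt : ∀ x : ℝ, (gaussianPDF 0 1 * fun x => ENNReal.ofReal (Real.exp (c * x - c ^ 2 / 2))) x
      = gaussianPDF c 1 x := by
    intro x
    simp only [Pi.mul_apply, gaussianPDF,
      ← ENNReal.ofReal_mul (gaussianPDFReal_nonneg 0 1 x)]
    congr 1
    simp only [gaussianPDFReal, NNReal.coe_one, mul_one]
    rw [mul_assoc, ← Real.exp_add]
    congr 1
    ring
  rw [lintegral_congr hpt]
  exact lintegral_gaussianPDF_eq_one c one_ne_zero

lemma indepFun_of_indep_aux {Ω : Type} {m₁ m₂ : MeasurableSpace Ω} {m0 : MeasurableSpace Ω}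
    {P : Measure Ω} {f g : Ω → ENNReal}
    (h : ProbabilityTheory.Indep m₁ m₂ P)
    (hf : Measurable[m₁] f) (hg : Measurable[m₂] g) :
    ProbabilityTheory.IndepFun f g P :=
  Kernel.indep_of_indep_of_le_left
    (Kernel.indep_of_indep_of_le_right h hg.comap_le) hf.comap_le

lemma fker_def {K : ℕ} {Ω : Type} (A : ℕ → Ω → Fin K) (η : ℕ → Ω → ℝ)
    (t : ℕ) (lam : Fin K → ℝ) (ω : Ω) :
    fker A η t lam ω =
      Real.exp ((∑ a, lam a * ∑ s ∈ (Finset.Icc 1 t).filter (fun s => A s ω = a), η s ω)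
        - ∑ a, (((Finset.Icc 1 t).filter fun s => A s ω = a).card : ℝ) * lam a ^ 2 / 2) := rfl

attribute [irreducible] fker

end Stmt12Aux

set_option maxHeartbeats 2000000 in
/-- mixture martingale for the method of mixtures. -/
theorem stmt12 (K : ℕ) (hK : 1 ≤ K)
    (Ω : Type) (m0 : MeasurableSpace Ω) (P : Measure Ω) [IsProbabilityMeasure P]
    (ℱ : Filtration ℕ m0)
    (η : ℕ → Ω → ℝ)
    (hηmeas : ∀ t, 1 ≤ t → Measurable[ℱ t] (η t))
    (hηindep : ∀ t, 1 ≤ t →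
      Indep (MeasurableSpace.comap (η t) inferInstance) (ℱ (t - 1)) P)
    (hηlaw : ∀ t, 1 ≤ t → P.map (η t) = gaussianReal 0 1)
    (A : ℕ → Ω → Fin K)
    (hAmeas : ∀ t, 1 ≤ t → Measurable[ℱ (t - 1)] (A t))
    (hAinit : ∀ s ω, 1 ≤ s → s ≤ K → (A s ω : ℕ) = s - 1)
    (ρ : Measure (Fin K → ℝ)) [IsProbabilityMeasure ρ]
    (M : ℕ → Ω → ℝ)
    (hM : ∀ t ω, M t ω = ∫ lam : Fin K → ℝ,
      Real.exp ((∑ a, lam a * ∑ s ∈ (Finset.Icc 1 t).filter (fun s => A s ω = a), η s ω)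
        - ∑ a, (((Finset.Icc 1 t).filter fun s => A s ω = a).card : ℝ) * lam a ^ 2 / 2) ∂ρ) :
    Martingale M ℱ P ∧ ∀ t, ∫ ω, M t ω ∂P = 1 := by
  classical
  have hM' : ∀ t ω, M t ω = ∫ lam, fker A η t lam ω ∂ρ := by
    intro t ω
    rw [hM t ω]
    congr 1
    funext lam
    rw [fker_def]
  -- measurability of A, η at various levels
  have hAm : ∀ t s, 1 ≤ s → s ≤ t → Measurable[ℱ t] (A s) := fun t s h1 h2 =>
    (hAmeas s h1).mono (ℱ.mono (by omega)) le_rfl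
  have hηm : ∀ t s, 1 ≤ s → s ≤ t → Measurable[ℱ t] (η s) := fun t s h1 h2 =>
    (hηmeas s h1).mono (ℱ.mono h2) le_rfl
  -- joint measurability at level ℱ t and at m0
  have hjoint : ∀ t, @Measurable (Ω × (Fin K → ℝ)) ℝ
      (@Prod.instMeasurableSpace _ _ (ℱ t) _) _ (fun p => fker A η t p.2 p.1) := fun t =>
    @fker_measurable K Ω (ℱ t) A η t (hAm t) (hηm t)
  have hjoint0 : ∀ t, Measurable (fun p : Ω × (Fin K → ℝ) => fker A η t p.2 p.1) := fun t =>
    fker_measurable A η t (fun s h1 _ => (hAmeas s h1).mono (ℱ.le _) le_rfl)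
      (fun s h1 _ => (hηmeas s h1).mono (ℱ.le _) le_rfl)
  have hωmeas : ∀ t lam, Measurable[ℱ t] (fun ω => fker A η t lam ω) := by
    intro t lam
    have hmk : @Measurable Ω (Ω × (Fin K → ℝ)) (ℱ t)
        (@Prod.instMeasurableSpace _ _ (ℱ t) _) (fun ω => (ω, lam)) :=
      measurable_id.prodMk measurable_const
    exact (hjoint t).comp hmk
  have hωmeas0 : ∀ t lam, Measurable (fun ω => fker A η t lam ω) := fun t lam =>
    (hωmeas t lam).mono (ℱ.le t) le_rfl
  -- ρ-integrability of the kernel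
  have hρint : ∀ t (ω : Ω), Integrable (fun lam => fker A η t lam ω) ρ := by
    intro t ω
    refine (integrable_const (Real.exp (∑ a,
      (∑ s ∈ (Finset.Icc 1 t).filter (fun s => A s ω = a), η s ω) ^ 2 / 2))).mono' ?_ ?_
    · apply Continuous.aestronglyMeasurable
      simp only [fker_def]
      exact Real.continuous_exp.comp
        ((continuous_finset_sum _ fun a _ => (continuous_apply a).mul continuous_const).sub
          (continuous_finset_sum _ fun a _ =>
            (continuous_const.mul ((continuous_apply a).pow 2)).div_const 2))
    · refine Filter.Eventually.of_forall fun lam => ?_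
      rw [Real.norm_eq_abs, abs_of_nonneg (fker_nonneg A η t lam ω)]
      exact fker_le A η t lam ω
  -- pointwise ofReal of M
  have hMofReal : ∀ t ω, ENNReal.ofReal (M t ω)
      = ∫⁻ lam, ENNReal.ofReal (fker A η t lam ω) ∂ρ := by
    intro t ω
    rw [hM' t ω]
    exact ofReal_integral_eq_lintegral_ofReal (hρint t ω)
      (Filter.Eventually.of_forall fun lam => fker_nonneg A η t lam ω)
  -- key one-step identity
  have hstep : ∀ t lam (B : Set Ω), MeasurableSet[ℱ t] B →
      ∫⁻ ω in B, ENNReal.ofReal (fker A η (t+1) lam ω) ∂P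
        = ∫⁻ ω in B, ENNReal.ofReal (fker A η t lam ω) ∂P := by
    intro t lam B hB
    have hBm : MeasurableSet B := ℱ.le t B hB
    have hAt : Measurable[ℱ t] (A (t+1)) := by
      have := hAmeas (t+1) (Nat.le_add_left 1 t); simpa using this
    have hind : Indep (MeasurableSpace.comap (η (t+1)) inferInstance) (ℱ t) P := by
      have := hηindep (t+1) (Nat.le_add_left 1 t); simpa using this
    have hηm0 : Measurable (η (t+1)) :=
      (hηmeas (t+1) (Nat.le_add_left 1 t)).mono (ℱ.le (t+1)) le_rfl
    obtain ⟨X, hX⟩ : ∃ X' : Ω → ENNReal,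
        X' = B.indicator (fun ω => ENNReal.ofReal (fker A η t lam ω)) := ⟨_, rfl⟩
    have hXmeas : Measurable[ℱ t] X := by
      rw [hX]; exact ((hωmeas t lam).ennreal_ofReal).indicator hB
    obtain ⟨f, hf⟩ : ∃ f' : Fin K → Ω → ENNReal,
        f' = fun a ω => X ω * (if A (t+1) ω = a then 1 else 0) := ⟨_, rfl⟩
    obtain ⟨g, hg⟩ : ∃ g' : Fin K → Ω → ENNReal,
        g' = fun a ω => ENNReal.ofReal (Real.exp (lam a * η (t+1) ω - lam a ^ 2 / 2)) := ⟨_, rfl⟩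
    have hfmeas : ∀ a, Measurable[ℱ t] (f a) := by
      intro a
      simp only [hf]
      exact hXmeas.mul (Measurable.ite (hAt (measurableSet_singleton a))
        measurable_const measurable_const)
    have hgm : ∀ a, Measurable (g a) := by
      intro a
      simp only [hg]
      exact (Real.measurable_exp.comp ((hηm0.const_mul _).sub_const _)).ennreal_ofReal
    have hgcomap : ∀ a, Measurable[MeasurableSpace.comap (η (t+1)) inferInstance] (g a) := by
      intro a
      simp only [hg]
      have hφ : Measurable (fun x : ℝ => ENNReal.ofReal (Real.exp (lam a * x - lam a ^ 2 / 2))) :=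
        (Real.measurable_exp.comp ((measurable_id.const_mul _).sub_const _)).ennreal_ofReal
      exact hφ.comp (measurable_iff_comap_le.mpr le_rfl)
    have hptw : ∀ ω, B.indicator (fun ω => ENNReal.ofReal (fker A η (t+1) lam ω)) ω
        = ∑ a, f a ω * g a ω := by
      intro ω
      have h1 : ∀ a : Fin K, f a ω * g a ω
          = if A (t+1) ω = a then X ω * g a ω else 0 := by
        intro a; simp only [hf]; split_ifs <;> simp
      rw [Finset.sum_congr rfl fun a _ => h1 a, Finset.sum_ite_eq]
      simp only [Finset.mem_univ, if_true]
      by_cases hω : ω ∈ B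
      · rw [Set.indicator_of_mem hω]
        simp only [hX, hg, Set.indicator_of_mem hω]
        rw [fker_succ, ENNReal.ofReal_mul (fker_nonneg A η t lam ω)]
      · rw [Set.indicator_of_notMem hω]
        simp [hX, Set.indicator_of_notMem hω]
    calc ∫⁻ ω in B, ENNReal.ofReal (fker A η (t + 1) lam ω) ∂P
        = ∫⁻ ω, B.indicator (fun ω => ENNReal.ofReal (fker A η (t+1) lam ω)) ω ∂P :=
          (lintegral_indicator hBm _).symm
      _ = ∫⁻ ω, ∑ a, f a ω * g a ω ∂P := lintegral_congr hptw
      _ = ∑ a, ∫⁻ ω, f a ω * g a ω ∂P :=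
          lintegral_finset_sum _ (fun a _ =>
            ((hfmeas a).mono (ℱ.le t) le_rfl).mul (hgm a))
      _ = ∑ a, (∫⁻ ω, f a ω ∂P) * ∫⁻ ω, g a ω ∂P := by
          refine Finset.sum_congr rfl fun a _ => ?_
          have hindf : IndepFun (f a) (g a) P :=
            (indepFun_of_indep_aux hind (hgcomap a) (hfmeas a)).symm
          have := lintegral_mul_eq_lintegral_mul_lintegral_of_indepFun
            ((hfmeas a).mono (ℱ.le t) le_rfl) (hgm a) hindf
          simpa using this
      _ = ∑ a, ∫⁻ ω, f a ω ∂P := by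
          refine Finset.sum_congr rfl fun a _ => ?_
          have hone : ∫⁻ ω, g a ω ∂P = 1 := by
            simp only [hg]
            have hφ : Measurable
                (fun x : ℝ => ENNReal.ofReal (Real.exp (lam a * x - lam a ^ 2 / 2))) :=
              (Real.measurable_exp.comp ((measurable_id.const_mul _).sub_const _)).ennreal_ofReal
            calc ∫⁻ ω, ENNReal.ofReal (Real.exp (lam a * η (t+1) ω - lam a ^ 2 / 2)) ∂P
                = ∫⁻ x, ENNReal.ofReal (Real.exp (lam a * x - lam a ^ 2 / 2))
                    ∂(P.map (η (t+1))) := (lintegral_map hφ hηm0).symm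
              _ = 1 := by rw [hηlaw (t+1) (Nat.le_add_left 1 t)]; exact gauss_lint (lam a)
          rw [hone, mul_one]
      _ = ∫⁻ ω, ∑ a, f a ω ∂P :=
          (lintegral_finset_sum _ fun a _ => (hfmeas a).mono (ℱ.le t) le_rfl).symm
      _ = ∫⁻ ω, X ω ∂P := by
          refine lintegral_congr fun ω => ?_
          simp only [hf]
          rw [← Finset.mul_sum, Finset.sum_ite_eq]
          simp
      _ = ∫⁻ ω in B, ENNReal.ofReal (fker A η t lam ω) ∂P := by
          rw [hX]
          exact lintegral_indicator hBm _
  -- total mass of the kernel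
  have hmass : ∀ t lam, ∫⁻ ω, ENNReal.ofReal (fker A η t lam ω) ∂P = 1 := by
    intro t lam
    induction t with
    | zero =>
      have h0 : ∀ ω, fker A η 0 lam ω = 1 := by
        intro ω
        rw [fker_def]
        rw [show Finset.Icc 1 0 = (∅ : Finset ℕ) from Finset.Icc_eq_empty (by omega)]
        simp
      simp [h0]
    | succ n ih =>
      have h := hstep n lam Set.univ MeasurableSet.univ
      simp only [Measure.restrict_univ] at h
      rwa [ih] at h
  -- lintegral of M over a set, via Tonelli
  have hMlin : ∀ t (B : Set Ω), MeasurableSet B →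
      ∫⁻ ω in B, ENNReal.ofReal (M t ω) ∂P
        = ∫⁻ lam, ∫⁻ ω in B, ENNReal.ofReal (fker A η t lam ω) ∂P ∂ρ := by
    intro t B hBm
    calc ∫⁻ ω in B, ENNReal.ofReal (M t ω) ∂P
        = ∫⁻ ω in B, ∫⁻ lam, ENNReal.ofReal (fker A η t lam ω) ∂ρ ∂P :=
          lintegral_congr fun ω => hMofReal t ω
      _ = ∫⁻ lam, ∫⁻ ω in B, ENNReal.ofReal (fker A η t lam ω) ∂P ∂ρ := by
          apply lintegral_lintegral_swap
          exact ((hjoint0 t).ennreal_ofReal).aemeasurable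
  have hMnonneg : ∀ t ω, 0 ≤ M t ω := fun t ω => by
    rw [hM t ω]; exact integral_nonneg fun lam => Real.exp_nonneg _
  have hMmass : ∀ t, ∫⁻ ω, ENNReal.ofReal (M t ω) ∂P = 1 := by
    intro t
    have h := hMlin t Set.univ MeasurableSet.univ
    simp only [Measure.restrict_univ] at h
    rw [h, lintegral_congr fun lam => hmass t lam]
    simp
  have hMsm : ∀ t, StronglyMeasurable[ℱ t] (M t) := by
    intro t
    have heq : M t = fun ω => ∫ lam, fker A η t lam ω ∂ρ := funext fun ω => hM' t ω
    rw [heq]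
    exact @StronglyMeasurable.integral_prod_right' Ω (Fin K → ℝ) ℝ (ℱ t) _ ρ _ _ _ _
      ((hjoint t).stronglyMeasurable)
  have hMint : ∀ t, Integrable (M t) P := by
    intro t
    refine ⟨((hMsm t).mono (ℱ.le t)).aestronglyMeasurable, ?_⟩
    rw [hasFiniteIntegral_iff_ofReal (Filter.Eventually.of_forall (hMnonneg t)), hMmass t]
    exact ENNReal.one_lt_top
  have hMone : ∀ t, ∫ ω, M t ω ∂P = 1 := by
    intro t
    have h := ofReal_integral_eq_lintegral_ofReal (hMint t)
      (Filter.Eventually.of_forall (hMnonneg t))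
    rw [hMmass t] at h
    exact ENNReal.ofReal_eq_one.mp h
  have hMsetReal : ∀ t (B : Set Ω), MeasurableSet[ℱ t] B →
      ∫ ω in B, M (t+1) ω ∂P = ∫ ω in B, M t ω ∂P := by
    intro t B hB
    have h1 := ofReal_integral_eq_lintegral_ofReal ((hMint (t+1)).restrict (s := B))
      (Filter.Eventually.of_forall (hMnonneg (t+1)))
    have h2 := ofReal_integral_eq_lintegral_ofReal ((hMint t).restrict (s := B))
      (Filter.Eventually.of_forall (hMnonneg t))
    have h3 : ∫⁻ ω in B, ENNReal.ofReal (M (t+1) ω) ∂P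
        = ∫⁻ ω in B, ENNReal.ofReal (M t ω) ∂P := by
      rw [hMlin (t+1) B (ℱ.le t B hB), hMlin t B (ℱ.le t B hB)]
      exact lintegral_congr fun lam => hstep t lam B hB
    rw [← h1, ← h2] at h3
    exact (ENNReal.ofReal_eq_ofReal_iff
      (integral_nonneg fun ω => hMnonneg (t+1) ω)
      (integral_nonneg fun ω => hMnonneg t ω)).mp h3
  refine ⟨martingale_nat (fun t => hMsm t) hMint (fun t => ?_), hMone⟩
  refine ae_eq_condExp_of_forall_setIntegral_eq (ℱ.le t) (hMint (t+1))
    (fun s hs _ => (hMint t).integrableOn) (fun s hs _ => (hMsetReal t s hs).symm)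
    ((hMsm t).aestronglyMeasurable)
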